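/- Let q be a prime power, n ≥ 3, and d ≤ q. Let P ∈ P^n(F_{q²}), let PU_{n-1} be the rank-n Hermitian variety with vertex P, and let V(F) be an F_{q²}-hypersurface of degree d with P ∉ V(F). Then |PU_{n-1} ∩ V(F)(F_{q²})| ≤ d·|U_{n-1}(F_{q²})|. -/

import Mathlib

private lemma degree_eq_sum_univ {σ : Type*} [Fintype σ] (α : σ →₀ ℕ) :
    α.degree = ∑ i, α i :=
  Finset.sum_subset (Finset.subset_univ _) fun i _ hi => Finsupp.notMem_support_iff.mp hi

private lemma aux_eval_smul {n d : ℕ} {K : Type} [Field K] {F : MvPolynomial (Fin n) K}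
    (hFd : F.IsHomogeneous d) (c : K) (x : Fin n → K) :
    MvPolynomial.eval (c • x) F = c ^ d * MvPolynomial.eval x F := by
  rw [MvPolynomial.eval_eq', MvPolynomial.eval_eq', Finset.mul_sum]
  refine Finset.sum_congr rfl fun α hα => ?_
  have hdeg : α.degree = d := by
    by_contra h
    exact (MvPolynomial.mem_support_iff.mp hα) (hFd.coeff_eq_zero h)
  have h1 : ∏ i, (c • x) i ^ α i = c ^ d * ∏ i, x i ^ α i := by
    simp only [Pi.smul_apply, smul_eq_mul, mul_pow]
    rw [Finset.prod_mul_distrib, Finset.prod_pow_eq_pow_sum, ← degree_eq_sum_univ, hdeg]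
  rw [h1]; ring

private lemma card_le_mul_of_fibers {α β : Type*} [Finite α] [Finite β] (f : α → β) (k : ℕ)
    (h : ∀ b, Nat.card {a // f a = b} ≤ k) : Nat.card α ≤ k * Nat.card β := by
  classical
  cases nonempty_fintype α
  cases nonempty_fintype β
  rw [Nat.card_eq_fintype_card, Nat.card_eq_fintype_card,
    ← Fintype.card_congr (Equiv.sigmaFiberEquiv f), Fintype.card_sigma]
  calc (∑ b : β, Fintype.card {a // f a = b}) ≤ ∑ _b : β, k :=
        Finset.sum_le_sum fun b _ => by rw [← Nat.card_eq_fintype_card]; exact h b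
    _ = k * Fintype.card β := by
        rw [Finset.sum_const, smul_eq_mul, mul_comm, Fintype.card]

private lemma aux_roots {n d : ℕ} {K : Type} [Field K] [Fintype K]
    {F : MvPolynomial (Fin (n + 1)) K} (hFd : F.IsHomogeneous d)
    (hP : MvPolynomial.eval (Pi.single (Fin.last n) (1 : K)) F ≠ 0) (w : Fin n → K) :
    Nat.card {t : K // MvPolynomial.eval (Fin.snoc w t) F = 0} ≤ d := by
  classical
  set g : Fin (n + 1) → Polynomial K := Fin.snoc (fun i => Polynomial.C (w i)) Polynomial.X
    with hg
  set p : Polynomial K := MvPolynomial.eval₂ Polynomial.C g F with hpdef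
  have hdegF : ∀ α ∈ F.support, α.degree = d := fun α hα => by
    by_contra h
    exact (MvPolynomial.mem_support_iff.mp hα) (hFd.coeff_eq_zero h)
  have hsingle : ∀ α ∈ F.support, α (Fin.last n) = d → α = Finsupp.single (Fin.last n) d := by
    intro α hα hlast
    have hsum : ∑ i : Fin n, α i.castSucc + α (Fin.last n) = d := by
      rw [← Fin.sum_univ_castSucc, ← degree_eq_sum_univ, hdegF α hα]
    have hz : ∀ i : Fin n, α i.castSucc = 0 := by
      rw [hlast] at hsum
      intro i
      have h0 : ∑ i : Fin n, α i.castSucc = 0 :=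
        Nat.add_right_cancel (hsum.trans (zero_add d).symm)
      exact Finset.sum_eq_zero_iff.mp h0 i (Finset.mem_univ i)
    ext i
    refine Fin.lastCases ?_ (fun j => ?_) i
    · simp [hlast]
    · rw [hz j, Finsupp.single_eq_of_ne' (Fin.castSucc_lt_last j).ne']
  have hc0 : F.coeff (Finsupp.single (Fin.last n) d) ≠ 0 := by
    intro hc
    apply hP
    rw [MvPolynomial.eval_eq']
    refine Finset.sum_eq_zero fun α hα => ?_
    rcases eq_or_ne α (Finsupp.single (Fin.last n) d) with rfl | hne
    · rw [hc, zero_mul]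
    · obtain ⟨j, hj⟩ : ∃ j : Fin n, α j.castSucc ≠ 0 := by
        by_contra hno
        push_neg at hno
        refine hne (hsingle α hα ?_)
        have hsum : ∑ i : Fin n, α i.castSucc + α (Fin.last n) = d := by
          rw [← Fin.sum_univ_castSucc, ← degree_eq_sum_univ, hdegF α hα]
        simpa [hno] using hsum
      have hzero : (Pi.single (Fin.last n) (1 : K) : Fin (n + 1) → K) j.castSucc ^ α j.castSucc = 0 := by
        rw [Pi.single_eq_of_ne (Fin.castSucc_lt_last j).ne]
        exact zero_pow hj
      rw [Finset.prod_eq_zero (Finset.mem_univ j.castSucc) hzero, mul_zero]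
  have hcoeff : ∀ m : ℕ, p.coeff m
      = ∑ α ∈ F.support,
          (if α (Fin.last n) = m then F.coeff α * ∏ i : Fin n, w i ^ α i.castSucc else 0) := by
    intro m
    rw [hpdef, MvPolynomial.eval₂_eq', Polynomial.finset_sum_coeff]
    refine Finset.sum_congr rfl fun α hα => ?_
    have hprod : ∏ i : Fin (n + 1), g i ^ α i
        = Polynomial.C (∏ i : Fin n, w i ^ α i.castSucc) * Polynomial.X ^ α (Fin.last n) := by
      rw [Fin.prod_univ_castSucc]
      simp only [hg, Fin.snoc_castSucc, Fin.snoc_last, ← Polynomial.C_pow]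
      rw [← map_prod]
    rw [hprod, ← mul_assoc, ← map_mul, Polynomial.coeff_C_mul, Polynomial.coeff_X_pow]
    rcases eq_or_ne (α (Fin.last n)) m with h | h
    · subst h; simp
    · rw [if_neg h, if_neg (Ne.symm h), mul_zero]
  have hpcoeff_d : p.coeff d = F.coeff (Finsupp.single (Fin.last n) d) := by
    rw [hcoeff d, Finset.sum_eq_single (Finsupp.single (Fin.last n) d)]
    · rw [if_pos Finsupp.single_eq_same]
      have h1 : ∀ i : Fin n, (Finsupp.single (Fin.last n) d) i.castSucc = 0 := fun i =>
        Finsupp.single_eq_of_ne' (Fin.castSucc_lt_last i).ne'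
      simp [h1]
    · intro α hα hne
      rcases eq_or_ne (α (Fin.last n)) d with h | h
      · exact absurd (hsingle α hα h) hne
      · exact if_neg h
    · intro h
      rw [if_pos Finsupp.single_eq_same, MvPolynomial.notMem_support_iff.mp h, zero_mul]
  have hpne : p ≠ 0 := fun h => hc0 (by rw [← hpcoeff_d, h, Polynomial.coeff_zero])
  have hpdeg : p.natDegree ≤ d := by
    rw [Polynomial.natDegree_le_iff_coeff_eq_zero]
    intro m hm
    rw [hcoeff m]
    refine Finset.sum_eq_zero fun α hα => ?_
    have h1 : α (Fin.last n) ≤ d := le_of_le_of_eq (Finsupp.le_degree _ _) (hdegF α hα)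
    exact if_neg (by omega)
  have heval : ∀ t : K, Polynomial.eval t p = MvPolynomial.eval (Fin.snoc w t) F := by
    intro t
    rw [hpdef, MvPolynomial.polynomial_eval_eval₂]
    have h1 : (Polynomial.evalRingHom t).comp Polynomial.C = RingHom.id K := by
      ext a; simp
    have h2 : (fun s => Polynomial.eval t (g s)) = Fin.snoc w t := by
      funext s
      refine Fin.lastCases ?_ (fun j => ?_) s <;> simp [hg]
    rw [h1, h2]
    rfl
  calc Nat.card {t : K // MvPolynomial.eval (Fin.snoc w t) F = 0}
      ≤ Nat.card {u : K // u ∈ p.roots.toFinset} := by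
        refine Nat.card_le_card_of_injective
          (fun t => ⟨t.1, by
            rw [Multiset.mem_toFinset, Polynomial.mem_roots']
            exact ⟨hpne, show Polynomial.eval t.1 p = 0 by rw [heval]; exact t.2⟩⟩)
          fun a b h => Subtype.ext (by simpa using congrArg Subtype.val h)
    _ = p.roots.toFinset.card := by rw [Nat.card_eq_fintype_card, Fintype.card_coe]
    _ ≤ Multiset.card p.roots := p.roots.toFinset_card_le
    _ ≤ p.natDegree := p.card_roots'
    _ ≤ d := hpdeg

/-- If the vertex `P = [0:...:0:1]` of the rank-`n` Hermitian cone
`PU_{n-1} = V(x_0^{q+1}+...+x_{n-1}^{q+1}) ⊆ ℙ^n(F_{q²})` does not lie on the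
degree-`d` hypersurface `V(F)` (`d ≤ q`), then
`|PU_{n-1} ∩ V(F)(F_{q²})| ≤ d·|U_{n-1}(F_{q²})|`. -/
theorem stmt8 (q n d : ℕ) (hq : IsPrimePow q) (hn : 3 ≤ n) (hd : 1 ≤ d) (hdq : d ≤ q)
    (K : Type) [Field K] [Fintype K] (hK : Fintype.card K = q ^ 2)
    (F : MvPolynomial (Fin (n + 1)) K) (hF : F ≠ 0) (hFd : F.IsHomogeneous d)
    (hP : MvPolynomial.eval (Pi.single (Fin.last n) (1 : K)) F ≠ 0) :
    Nat.card {x : Projectivization K (Fin (n + 1) → K) //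
        (∑ i : Fin (n + 1), (if (i : ℕ) < n then x.rep i ^ (q + 1) else 0)) = 0 ∧
        MvPolynomial.eval x.rep F = 0}
      ≤ d * Nat.card {y : Projectivization K (Fin n → K) //
          ∑ i : Fin n, y.rep i ^ (q + 1) = 0} := by
  classical
  have hd0 : d ≠ 0 := by omega
  have hfinP : ∀ m : ℕ, Finite (Projectivization K (Fin m → K)) := fun m =>
    Finite.of_surjective (fun v : {v : Fin m → K // v ≠ 0} => Projectivization.mk K v.1 v.2)
      fun x => ⟨⟨x.rep, x.rep_nonzero⟩, x.mk_rep⟩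
  haveI := hfinP n
  haveI := hfinP (n + 1)
  -- the first `n` coordinates of a point of the intersection cannot all vanish
  have hinit : ∀ x : {x : Projectivization K (Fin (n + 1) → K) //
        (∑ i : Fin (n + 1), (if (i : ℕ) < n then x.rep i ^ (q + 1) else 0)) = 0 ∧
        MvPolynomial.eval x.rep F = 0}, Fin.init x.1.rep ≠ 0 := by
    rintro ⟨x, hx1, hx2⟩ h0
    have hrep : x.rep = x.rep (Fin.last n) • (Pi.single (Fin.last n) (1 : K) : Fin (n + 1) → K) := by
      funext i
      refine Fin.lastCases ?_ (fun j => ?_) i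
      · simp
      · have h3 : x.rep j.castSucc = Fin.init x.rep j := rfl
        rw [h3, h0]
        simp [Pi.single_eq_of_ne (Fin.castSucc_lt_last j).ne]
    rw [hrep, aux_eval_smul hFd] at hx2
    rcases mul_eq_zero.mp hx2 with h | h
    · have h4 : x.rep (Fin.last n) = 0 := (pow_eq_zero_iff hd0).mp h
      exact x.rep_nonzero (by rw [hrep, h4, zero_smul])
    · exact hP h
  have hsumS : ∀ x : {x : Projectivization K (Fin (n + 1) → K) //
        (∑ i : Fin (n + 1), (if (i : ℕ) < n then x.rep i ^ (q + 1) else 0)) = 0 ∧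
        MvPolynomial.eval x.rep F = 0}, ∑ i : Fin n, Fin.init x.1.rep i ^ (q + 1) = 0 := by
    rintro ⟨x, hx1, hx2⟩
    rw [Fin.sum_univ_castSucc] at hx1
    simpa [Fin.init] using hx1
  let f : {x : Projectivization K (Fin (n + 1) → K) //
        (∑ i : Fin (n + 1), (if (i : ℕ) < n then x.rep i ^ (q + 1) else 0)) = 0 ∧
        MvPolynomial.eval x.rep F = 0} →
      {y : Projectivization K (Fin n → K) // ∑ i : Fin n, y.rep i ^ (q + 1) = 0} := fun x =>
    ⟨Projectivization.mk K (Fin.init x.1.rep) (hinit x), by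
      obtain ⟨a, ha⟩ := Projectivization.exists_smul_eq_mk_rep K (Fin.init x.1.rep) (hinit x)
      rw [← ha]
      simp only [Pi.smul_apply, Units.smul_def, smul_eq_mul, mul_pow, ← Finset.mul_sum]
      rw [hsumS x, mul_zero]⟩
  have hfiber : ∀ y, Nat.card {x // f x = y} ≤ d := by
    intro y
    have hsnoc : ∀ t0 : K, Fin.snoc y.1.rep t0 ≠ (0 : Fin (n + 1) → K) := by
      intro t0 hcon
      apply y.1.rep_nonzero
      funext j
      have h5 := congrFun hcon j.castSucc
      rw [Fin.snoc_castSucc] at h5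
      simpa using h5
    have key : ∀ z : {x // f x = y}, ∃ t : K,
        MvPolynomial.eval (Fin.snoc y.1.rep t) F = 0 ∧
        ∃ a : Kˣ, (a : K) • (Fin.snoc y.1.rep t : Fin (n + 1) → K) = z.1.1.rep := by
      rintro ⟨x, hx⟩
      have hmk : Projectivization.mk K (Fin.init x.1.rep) (hinit x)
          = Projectivization.mk K y.1.rep y.1.rep_nonzero :=
        (congrArg Subtype.val hx).trans (Projectivization.mk_rep y.1).symm
      obtain ⟨a, ha⟩ := (Projectivization.mk_eq_mk_iff K _ _ (hinit x) y.1.rep_nonzero).mp hmk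
      have hrep : (a : K) • (Fin.snoc y.1.rep ((a : K)⁻¹ * x.1.rep (Fin.last n)) : Fin (n + 1) → K) = x.1.rep := by
        funext i
        refine Fin.lastCases ?_ (fun j => ?_) i
        · simp only [Pi.smul_apply, Fin.snoc_last, smul_eq_mul]
          rw [← mul_assoc, mul_inv_cancel₀ (Units.ne_zero a), one_mul]
        · have h6 : (a • y.1.rep) j = Fin.init x.1.rep j := congrFun ha j
          simp only [Pi.smul_apply, Units.smul_def, smul_eq_mul] at h6
          simp only [Pi.smul_apply, Fin.snoc_castSucc, smul_eq_mul]
          exact h6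
      refine ⟨(a : K)⁻¹ * x.1.rep (Fin.last n), ?_, a, hrep⟩
      have h7 := x.2.2
      rw [← hrep, aux_eval_smul hFd] at h7
      rcases mul_eq_zero.mp h7 with h | h
      · exact absurd ((pow_eq_zero_iff hd0).mp h) (Units.ne_zero a)
      · exact h
    choose t ht ha using key
    have hinj : Function.Injective (fun z => (⟨t z, ht z⟩ :
        {t : K // MvPolynomial.eval (Fin.snoc y.1.rep t) F = 0})) := by
      intro z1 z2 h
      have hteq : t z1 = t z2 := by simpa using congrArg Subtype.val h
      obtain ⟨a1, ha1⟩ := ha z1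
      obtain ⟨a2, ha2⟩ := ha z2
      apply Subtype.ext
      apply Subtype.ext
      calc z1.1.1 = Projectivization.mk K z1.1.1.rep z1.1.1.rep_nonzero :=
            (Projectivization.mk_rep _).symm
        _ = Projectivization.mk K (Fin.snoc y.1.rep (t z1)) (hsnoc _) := by
            rw [Projectivization.mk_eq_mk_iff]
            exact ⟨a1, by rw [Units.smul_def]; exact ha1⟩
        _ = Projectivization.mk K (Fin.snoc y.1.rep (t z2)) (hsnoc _) := by rw [hteq]
        _ = Projectivization.mk K z2.1.1.rep z2.1.1.rep_nonzero := by
            rw [Projectivization.mk_eq_mk_iff]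
            exact ⟨a2⁻¹, by
              rw [Units.smul_def, Units.val_inv_eq_inv_val, ← ha2, smul_smul,
                inv_mul_cancel₀ (Units.ne_zero a2), one_smul]⟩
        _ = z2.1.1 := Projectivization.mk_rep _
    calc Nat.card {x // f x = y}
        ≤ Nat.card {t : K // MvPolynomial.eval (Fin.snoc y.1.rep t) F = 0} :=
          Nat.card_le_card_of_injective _ hinj
      _ ≤ d := aux_roots hFd hP y.1.rep
  exact card_le_mul_of_fibers f d hfiber
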